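/- Uniform bound on optimal controls in the mean field setting: for every μ ∈ P(Γ_C), every x ∈ Σ and every optimal trajectory (y,α) ∈ Γ^{μ,opt}[x], one has ‖α‖_{L²(0,T)}² ≤ 4K(T+1), where K is the common bound on ‖L[m]‖_∞ and ‖G[m]‖_∞. In particular there exists a constant C̃ (independent of μ and x) such that every optimal control has L²-norm at most C̃. -/

import Mathlib

open MeasureTheory Set Filter Topology

noncomputable section

/-- Squared Euclidean norm on ℝ². -/
def sq2 (v : ℝ × ℝ) : ℝ := v.1 ^ 2 + v.2 ^ 2

/-- Euclidean norm on ℝ². -/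
def enorm2 (v : ℝ × ℝ) : ℝ := Real.sqrt (sq2 v)

/-- `(y, α)` is an admissible trajectory for the Grushin-type dynamics on `[t,T]`,
starting from `x` and constrained to the set `S`. -/
def Admissible (ν : ℝ) (S : Set (ℝ × ℝ)) (t T : ℝ) (x : ℝ × ℝ)
    (y α : ℝ → ℝ × ℝ) : Prop :=
  Measurable α ∧
  IntervalIntegrable (fun τ => (α τ).1) volume t T ∧
  IntervalIntegrable (fun τ => |(y τ).1| ^ ν * (α τ).2) volume t T ∧
  (∀ s ∈ Icc t T, (y s).1 = x.1 + ∫ τ in t..s, (α τ).1) ∧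
  (∀ s ∈ Icc t T, (y s).2 = x.2 + ∫ τ in t..s, |(y τ).1| ^ ν * (α τ).2) ∧
  (∀ s ∈ Icc t T, y s ∈ S)

/-- `α ∈ L²(t,T)`. -/
def InL2 (α : ℝ → ℝ × ℝ) (t T : ℝ) : Prop :=
  IntervalIntegrable (fun τ => sq2 (α τ)) volume t T

/-- An admissible pair on `[0,T]` with square-integrable control. -/
def AdmPair (ν : ℝ) (S : Set (ℝ × ℝ)) (T : ℝ) (x : ℝ × ℝ) (y α : ℝ → ℝ × ℝ) : Prop :=
  Admissible ν S 0 T x y α ∧ InL2 α 0 T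

/-- The space of curves `C([0,T]; ℝ²)` (with the uniform topology) carries the Borel
σ-algebra. -/
instance (T : ℝ) : MeasurableSpace C(Icc (0 : ℝ) T, ℝ × ℝ) := borel _
instance (T : ℝ) : BorelSpace C(Icc (0 : ℝ) T, ℝ × ℝ) := ⟨rfl⟩

/-- Extension of a curve on `[0,T]` to all of `ℝ` (constant outside `[0,T]`). -/
def extCurve (T : ℝ) (hT : 0 ≤ T) (f : C(Icc (0 : ℝ) T, ℝ × ℝ)) : ℝ → ℝ × ℝ :=
  fun s => f (projIcc 0 T hT s)

/-- `m^μ(t) = e_t ♯ μ`, the image of `μ` by the evaluation map at time `t`. -/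
def mOf (T : ℝ) (hT : 0 ≤ T) (μ : ProbabilityMeasure C(Icc (0 : ℝ) T, ℝ × ℝ)) (t : ℝ) :
    ProbabilityMeasure (ℝ × ℝ) :=
  μ.map (f := fun f => extCurve T hT f t)
    (ContinuousEvalConst.continuous_eval_const _).measurable.aemeasurable

/-- `Γ_C[x]`: curves in `C([0,T];ℝ²)` admissible from `x`, with `‖y‖_∞ ≤ C` and
`‖α‖_{L²} ≤ C`. -/
def GammaCx (ν : ℝ) (S : Set (ℝ × ℝ)) (T : ℝ) (hT : 0 ≤ T) (Cb : ℝ) (x : ℝ × ℝ) :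
    Set C(Icc (0 : ℝ) T, ℝ × ℝ) :=
  {f | ∃ α : ℝ → ℝ × ℝ, AdmPair ν S T x (extCurve T hT f) α ∧
    (∀ s ∈ Icc (0 : ℝ) T, enorm2 (extCurve T hT f s) ≤ Cb) ∧
    Real.sqrt (∫ τ in (0 : ℝ)..T, sq2 (α τ)) ≤ Cb}

/-- `Γ_C = ⋃_{x ∈ Σ} Γ_C[x]`. -/
def GammaCset (ν : ℝ) (S : Set (ℝ × ℝ)) (T : ℝ) (hT : 0 ≤ T) (Cb : ℝ) :
    Set C(Icc (0 : ℝ) T, ℝ × ℝ) :=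
  ⋃ x ∈ S, GammaCx ν S T hT Cb x

/-- The cost `J^μ(x;(y,α))` associated with `μ ∈ P(Γ_C)`. -/
def costMu (T : ℝ) (hT : 0 ≤ T)
    (L : ProbabilityMeasure (ℝ × ℝ) → BoundedContinuousFunction ((ℝ × ℝ) × ℝ) ℝ)
    (G : ProbabilityMeasure (ℝ × ℝ) → BoundedContinuousFunction (ℝ × ℝ) ℝ)
    (μ : ProbabilityMeasure C(Icc (0 : ℝ) T, ℝ × ℝ)) (y α : ℝ → ℝ × ℝ) : ℝ :=
  (∫ τ in (0 : ℝ)..T, (L (mOf T hT μ τ) (y τ, τ) + sq2 (α τ) / 2)) +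
    G (mOf T hT μ T) (y T)

/-- `Γ^{μ,opt}[x]`: admissible pairs from `x` with finite cost minimizing `J^μ(x;·)`. -/
def GammaMuOpt (ν : ℝ) (S : Set (ℝ × ℝ)) (T : ℝ) (hT : 0 ≤ T)
    (L : ProbabilityMeasure (ℝ × ℝ) → BoundedContinuousFunction ((ℝ × ℝ) × ℝ) ℝ)
    (G : ProbabilityMeasure (ℝ × ℝ) → BoundedContinuousFunction (ℝ × ℝ) ℝ)
    (μ : ProbabilityMeasure C(Icc (0 : ℝ) T, ℝ × ℝ)) (x : ℝ × ℝ) :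
    Set ((ℝ → ℝ × ℝ) × (ℝ → ℝ × ℝ)) :=
  {p | AdmPair ν S T x p.1 p.2 ∧
    ∀ q : (ℝ → ℝ × ℝ) × (ℝ → ℝ × ℝ), AdmPair ν S T x q.1 q.2 →
      costMu T hT L G μ p.1 p.2 ≤ costMu T hT L G μ q.1 q.2}

/-- `Γ_C^{μ,opt}[x]`: curves of `Γ_C[x]` which are optimal for `J^μ(x;·)`. -/
def GammaCMuOpt (ν : ℝ) (S : Set (ℝ × ℝ)) (T : ℝ) (hT : 0 ≤ T) (Cb : ℝ)
    (L : ProbabilityMeasure (ℝ × ℝ) → BoundedContinuousFunction ((ℝ × ℝ) × ℝ) ℝ)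
    (G : ProbabilityMeasure (ℝ × ℝ) → BoundedContinuousFunction (ℝ × ℝ) ℝ)
    (μ : ProbabilityMeasure C(Icc (0 : ℝ) T, ℝ × ℝ)) (x : ℝ × ℝ) :
    Set C(Icc (0 : ℝ) T, ℝ × ℝ) :=
  {f | f ∈ GammaCx ν S T hT Cb x ∧
    ∃ α : ℝ → ℝ × ℝ, (extCurve T hT f, α) ∈ GammaMuOpt ν S T hT L G μ x}

/-- The (topological) support of a measure. -/
def msupp {Ω : Type*} [TopologicalSpace Ω] [MeasurableSpace Ω] (m : Measure Ω) : Set Ω :=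
  {ω | ∀ U : Set Ω, IsOpen U → ω ∈ U → m U ≠ 0}

/-- `P_{m₀}(Γ_C)`: probability measures carried by `Γ_C` whose image at time `0` is `m₀`. -/
def Pm0 (ν : ℝ) (S : Set (ℝ × ℝ)) (T : ℝ) (hT : 0 ≤ T) (Cb : ℝ)
    (m₀ : ProbabilityMeasure (ℝ × ℝ)) :
    Set (ProbabilityMeasure C(Icc (0 : ℝ) T, ℝ × ℝ)) :=
  {μ | μ.toMeasure (GammaCset ν S T hT Cb) = 1 ∧
    μ.toMeasure.map (fun f => extCurve T hT f 0) = m₀.toMeasure}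

/-- Standing assumption (iii): at every point of `Σ`, either the approximation property (a)
of admissible trajectories holds, or (b) the point is unreachable. -/
def AssumptionIII (ν : ℝ) (S : Set (ℝ × ℝ)) (T : ℝ) : Prop :=
  ∀ x ∈ S,
    (∀ y α : ℝ → ℝ × ℝ, AdmPair ν S T x y α →
      ∀ xs : ℕ → ℝ × ℝ, (∀ n, xs n ∈ S) → Tendsto xs atTop (𝓝 x) →
        ∃ ys as : ℕ → ℝ → ℝ × ℝ,
          (∀ n, AdmPair ν S T (xs n) (ys n) (as n)) ∧
          TendstoUniformlyOn ys y atTop (Icc 0 T) ∧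
          Tendsto (fun n => ∫ τ in (0 : ℝ)..T, sq2 (as n τ)) atTop
            (𝓝 (∫ τ in (0 : ℝ)..T, sq2 (α τ)))) ∨
    (∀ xb ∈ S \ {x}, ¬ ∃ y α : ℝ → ℝ × ℝ, AdmPair ν S T xb y α ∧ y T = x)

/-- Continuity of `t ↦ m^μ(t)` in the narrow topology. -/
lemma mOf_continuous (T : ℝ) (hT : 0 ≤ T) (μ : ProbabilityMeasure C(Icc (0 : ℝ) T, ℝ × ℝ)) :
    Continuous (fun t : ℝ => mOf T hT μ t) := by
  rw [continuous_iff_continuousAt]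
  intro t₀
  rw [ContinuousAt, ProbabilityMeasure.tendsto_iff_forall_integral_tendsto]
  intro g
  have hmeas : ∀ t : ℝ, AEMeasurable (fun f : C(Icc (0 : ℝ) T, ℝ × ℝ) => extCurve T hT f t)
      μ.toMeasure := fun t =>
    (ContinuousEvalConst.continuous_eval_const _).measurable.aemeasurable
  have hkey : ∀ t : ℝ, ∫ ω, g ω ∂((mOf T hT μ t : Measure (ℝ × ℝ))) =
      ∫ f, g (extCurve T hT f t) ∂μ.toMeasure := by
    intro t
    change ∫ ω, g ω ∂(Measure.map (fun f => extCurve T hT f t) μ.toMeasure) = _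
    exact integral_map (hmeas t) g.continuous.aestronglyMeasurable
  simp only [hkey]
  have hcont : Continuous fun t : ℝ => ∫ f, g (extCurve T hT f t) ∂μ.toMeasure := by
    apply continuous_of_dominated (bound := fun _ => ‖g‖)
    · intro t
      exact (g.continuous.comp
        ((ContinuousEvalConst.continuous_eval_const _))).aestronglyMeasurable
    · intro t
      exact Eventually.of_forall fun f => g.norm_coe_le_norm _
    · exact integrable_const _
    · exact Eventually.of_forall fun f =>
        g.continuous.comp (f.continuous.comp continuous_projIcc)
  exact hcont.tendsto t₀

/-- uniform bound on optimal controls in the mean field setting. -/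
theorem optimal_controls_uniform_bound
    (T ν : ℝ) (hT : 0 < T) (hν : 0 < ν)
    (S : Set (ℝ × ℝ)) (hS : IsClosed S)
    (Cb : ℝ) (hCb : 0 < Cb)
    (L : ProbabilityMeasure (ℝ × ℝ) → BoundedContinuousFunction ((ℝ × ℝ) × ℝ) ℝ)
    (G : ProbabilityMeasure (ℝ × ℝ) → BoundedContinuousFunction (ℝ × ℝ) ℝ)
    (hLc : Continuous L) (hGc : Continuous G)
    (K : ℝ) (hK : ∀ m : ProbabilityMeasure (ℝ × ℝ), ‖L m‖ ≤ K ∧ ‖G m‖ ≤ K) :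
    (∀ μ : ProbabilityMeasure C(Icc (0 : ℝ) T, ℝ × ℝ),
      μ.toMeasure (GammaCset ν S T hT.le Cb) = 1 →
      ∀ x ∈ S, ∀ y α : ℝ → ℝ × ℝ,
        (y, α) ∈ GammaMuOpt ν S T hT.le L G μ x →
          (∫ τ in (0 : ℝ)..T, sq2 (α τ)) ≤ 4 * K * (T + 1)) ∧
    ∃ Ct : ℝ, ∀ μ : ProbabilityMeasure C(Icc (0 : ℝ) T, ℝ × ℝ),
      μ.toMeasure (GammaCset ν S T hT.le Cb) = 1 →
      ∀ x ∈ S, ∀ y α : ℝ → ℝ × ℝ,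
        (y, α) ∈ GammaMuOpt ν S T hT.le L G μ x →
          Real.sqrt (∫ τ in (0 : ℝ)..T, sq2 (α τ)) ≤ Ct := by
  have hK0 : 0 ≤ K := le_trans (norm_nonneg _)
    (hK ⟨Measure.dirac 0, inferInstance⟩).1
  have main : ∀ μ : ProbabilityMeasure C(Icc (0 : ℝ) T, ℝ × ℝ),
      μ.toMeasure (GammaCset ν S T hT.le Cb) = 1 →
      ∀ x ∈ S, ∀ y α : ℝ → ℝ × ℝ,
        (y, α) ∈ GammaMuOpt ν S T hT.le L G μ x →
          (∫ τ in (0 : ℝ)..T, sq2 (α τ)) ≤ 4 * K * (T + 1) := by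
    intro μ _ x hx y α hopt
    obtain ⟨hadm, hmin⟩ := hopt
    obtain ⟨⟨hα_meas, hint1, hint2, hy1, hy2, hyS⟩, hInL2⟩ := hadm
    -- the zero competitor
    have hzero : AdmPair ν S T x (fun _ => x) (fun _ => (0 : ℝ × ℝ)) := by
      refine ⟨⟨measurable_const, ?_, ?_, ?_, ?_, fun s _ => hx⟩, ?_⟩
      · simpa using intervalIntegrable_const (μ := volume) (c := (0 : ℝ))
      · simpa using intervalIntegrable_const (μ := volume) (c := (0 : ℝ))
      · intro s _; simp
      · intro s _; simp
      · simpa [InL2, sq2] using intervalIntegrable_const (μ := volume) (c := (0 : ℝ))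
    have hle := hmin ((fun _ => x), (fun _ => (0 : ℝ × ℝ))) hzero
    -- continuity of `y` on `[0,T]`
    have hIcc : uIcc (0 : ℝ) T = Icc 0 T := uIcc_of_le hT.le
    have hy1c : ContinuousOn (fun s => (y s).1) (Icc 0 T) := by
      have h := intervalIntegral.continuousOn_primitive_interval'
        (f := fun τ => (α τ).1) (μ := volume) hint1 left_mem_uIcc
      rw [hIcc] at h
      exact (continuousOn_const.add h).congr fun s hs => hy1 s hs
    have hy2c : ContinuousOn (fun s => (y s).2) (Icc 0 T) := by
      have h := intervalIntegral.continuousOn_primitive_interval'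
        (f := fun τ => |(y τ).1| ^ ν * (α τ).2) (μ := volume) hint2 left_mem_uIcc
      rw [hIcc] at h
      exact (continuousOn_const.add h).congr fun s hs => hy2 s hs
    have hyc : ContinuousOn y (Icc 0 T) := hy1c.prodMk hy2c
    -- the running cost terms
    set ℓ : ℝ → ℝ := fun τ => L (mOf T hT.le μ τ) ((y τ, τ)) with hℓdef
    set ℓ0 : ℝ → ℝ := fun τ => L (mOf T hT.le μ τ) ((x, τ)) with hℓ0def
    have h1 : Continuous (fun t : ℝ => L (mOf T hT.le μ t)) :=
      hLc.comp (mOf_continuous T hT.le μ)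
    have hℓc : ContinuousOn ℓ (Icc 0 T) := by
      have hpair : ContinuousOn
          (fun τ : ℝ => ((L (mOf T hT.le μ τ)), ((y τ, τ)))) (Icc 0 T) :=
        h1.continuousOn.prodMk (hyc.prodMk continuousOn_id)
      exact continuous_eval.comp_continuousOn hpair
    have hℓ0c : Continuous ℓ0 := by
      have hpair : Continuous (fun τ : ℝ => ((L (mOf T hT.le μ τ)), ((x, τ)))) :=
        h1.prodMk (continuous_const.prodMk continuous_id)
      exact continuous_eval.comp hpair
    have hℓint : IntervalIntegrable ℓ volume 0 T := by
      apply ContinuousOn.intervalIntegrable; rwa [hIcc]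
    have hℓ0int : IntervalIntegrable ℓ0 volume 0 T := hℓ0c.intervalIntegrable 0 T
    have hsqint : IntervalIntegrable (fun τ => sq2 (α τ) / 2) volume 0 T :=
      hInL2.div_const 2
    -- rewrite the two costs
    have hcost1 : costMu T hT.le L G μ y α =
        (∫ τ in (0 : ℝ)..T, ℓ τ) + (∫ τ in (0 : ℝ)..T, sq2 (α τ)) / 2 +
          G (mOf T hT.le μ T) (y T) := by
      rw [costMu, intervalIntegral.integral_add hℓint hsqint,
        intervalIntegral.integral_div]
    have hcost0 : costMu T hT.le L G μ (fun _ => x) (fun _ => (0 : ℝ × ℝ)) =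
        (∫ τ in (0 : ℝ)..T, ℓ0 τ) + G (mOf T hT.le μ T) x := by
      rw [costMu]
      congr 1
      apply intervalIntegral.integral_congr
      intro τ _
      simp [sq2, hℓ0def]
    rw [hcost1, hcost0] at hle
    -- pointwise bounds
    have hKT : (∫ τ in (0 : ℝ)..T, ℓ0 τ) ≤ K * T := by
      have h := intervalIntegral.integral_mono_on (μ := volume) hT.le hℓ0int
        (intervalIntegrable_const (c := K)) (fun τ _ => by
          calc ℓ0 τ ≤ |ℓ0 τ| := le_abs_self _
          _ ≤ ‖L (mOf T hT.le μ τ)‖ := by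
              simpa [Real.norm_eq_abs] using
                (L (mOf T hT.le μ τ)).norm_coe_le_norm ((x, τ))
          _ ≤ K := (hK _).1)
      simpa [mul_comm] using h
    have hKT' : -(K * T) ≤ ∫ τ in (0 : ℝ)..T, ℓ τ := by
      have h := intervalIntegral.integral_mono_on (μ := volume) hT.le
        (intervalIntegrable_const (c := -K)) hℓint (fun τ _ => by
          have habs : |ℓ τ| ≤ K := by
            calc |ℓ τ| ≤ ‖L (mOf T hT.le μ τ)‖ := by
                  simpa [Real.norm_eq_abs] using
                    (L (mOf T hT.le μ τ)).norm_coe_le_norm ((y τ, τ))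
            _ ≤ K := (hK _).1
          have := neg_abs_le (ℓ τ)
          linarith)
      have h' : (T - 0) • (-K) ≤ ∫ τ in (0 : ℝ)..T, ℓ τ := by
        simpa using h
      simp only [smul_eq_mul, sub_zero] at h'
      linarith
    have hG1 : -K ≤ G (mOf T hT.le μ T) (y T) := by
      have habs : |G (mOf T hT.le μ T) (y T)| ≤ K := by
        calc |G (mOf T hT.le μ T) (y T)| ≤ ‖G (mOf T hT.le μ T)‖ := by
              simpa [Real.norm_eq_abs] using
                (G (mOf T hT.le μ T)).norm_coe_le_norm (y T)
        _ ≤ K := (hK _).2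
      have := neg_abs_le (G (mOf T hT.le μ T) (y T))
      linarith
    have hG0 : G (mOf T hT.le μ T) x ≤ K := by
      calc G (mOf T hT.le μ T) x ≤ |G (mOf T hT.le μ T) x| := le_abs_self _
      _ ≤ ‖G (mOf T hT.le μ T)‖ := by
          simpa [Real.norm_eq_abs] using
            (G (mOf T hT.le μ T)).norm_coe_le_norm x
      _ ≤ K := (hK _).2
    linarith
  refine ⟨main, ⟨Real.sqrt (4 * K * (T + 1)), fun μ hμ x hx y α hopt => ?_⟩⟩
  exact Real.sqrt_le_sqrt (main μ hμ x hx y α hopt)
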